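/- Let V be a vertex superalgebra and x ∈ V₁ with x_{(0)}x = 0 and vac ∉ Im(x_{(0)}). Then Ker_V(x_{(0)})/Im_V(x_{(0)}), equipped with the induced vacuum vector, translation operator, and state-field map, is a vertex superalgebra. -/

import Mathlib

/-- `(−1)^m` for `m : ℤ`. -/
noncomputable def zsgn (m : ℤ) : ℂ := if Even m then 1 else -1

/-- The sign `(−1)^{ij}` for parities `i, j ∈ ℤ/2`. -/
noncomputable def ssgn (i j : ZMod 2) : ℂ := if i = 1 ∧ j = 1 then -1 else 1

/-- The binomial coefficient `C(m, t)` for integer `m`. -/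
noncomputable def zchoose (m : ℤ) (t : ℕ) : ℂ :=
  (∏ j ∈ Finset.range t, ((m : ℂ) - j)) / (t.factorial : ℂ)

/-- A vertex superalgebra over `ℂ`: a `ℤ/2`-graded space with vacuum, translation
operator and modes `Y n a = a_{(n)}`, satisfying truncation, vacuum and translation
axioms and the Borcherds (locality) identity on homogeneous elements, where the sum
is truncated at any sufficiently large bound. -/
structure VertexSuperAlgebra (V : Type*) [AddCommGroup V] [Module ℂ V] where
  G : ZMod 2 → Submodule ℂ V
  compl : IsCompl (G 0) (G 1)
  vac : V
  vacNe : vac ≠ 0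
  vacEven : vac ∈ G 0
  T : V →ₗ[ℂ] V
  Y : ℤ → V →ₗ[ℂ] V →ₗ[ℂ] V
  parity : ∀ (i j : ZMod 2) (n : ℤ), ∀ a ∈ G i, ∀ b ∈ G j, Y n a b ∈ G (i + j)
  trunc : ∀ a b : V, ∃ N : ℤ, ∀ n ≥ N, Y n a b = 0
  vacLeft : ∀ (n : ℤ) (a : V), Y n vac a = if n = -1 then a else 0
  vacRight : ∀ (a : V) (n : ℤ), 0 ≤ n → Y n a vac = 0
  vacCreate : ∀ a : V, Y (-1) a vac = a
  Tvac : T vac = 0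
  transl : ∀ (a b : V) (n : ℤ), T (Y n a b) - Y n a (T b) = (-n : ℂ) • Y (n - 1) a b
  borcherds : ∀ (i j : ZMod 2), ∀ a ∈ G i, ∀ b ∈ G j, ∀ (m n : ℤ) (c : V),
    ∃ K : ℕ, ∀ K' : ℕ, K ≤ K' →
      Y n (Y m a b) c =
        ∑ t ∈ Finset.range K', ((-1 : ℂ) ^ t * zchoose m t) •
          (Y (m - t) a (Y (n + t) b c)
            - (zsgn m * ssgn i j) • Y (m + n - t) b (Y (t : ℤ) a c))

/-- The Duflo–Serganova space of a square-zero operator: `Ker / Im`. -/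
abbrev DS {V : Type*} [AddCommGroup V] [Module ℂ V] (x : V →ₗ[ℂ] V) :=
  LinearMap.ker x ⧸ (LinearMap.range x).comap (LinearMap.ker x).subtype
namespace Stmt8Aux

lemma zchoose_zero_ne (t : ℕ) (ht : t ≠ 0) : zchoose 0 t = 0 := by
  unfold zchoose
  rw [Finset.prod_eq_zero (Finset.mem_range.mpr (Nat.pos_of_ne_zero ht)) (by norm_num)]
  simp

lemma ssgn_mul_self (i j : ZMod 2) : ssgn i j * ssgn i j = 1 := by
  unfold ssgn; split <;> norm_num

variable {V : Type*} [AddCommGroup V] [Module ℂ V] (W : VertexSuperAlgebra V) {x : V}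

/-- Key consequence of Borcherds with `m = 0`. -/
lemma keyA (hx : x ∈ W.G 1) {j : ZMod 2} {a : V} (ha : a ∈ W.G j) (n : ℤ) (c : V) :
    W.Y n (W.Y 0 x a) c
      = W.Y 0 x (W.Y n a c) - ssgn 1 j • W.Y n a (W.Y 0 x c) := by
  obtain ⟨K, hK⟩ := W.borcherds 1 j x hx a ha 0 n c
  have h := hK (K + 1) (Nat.le_add_right _ _)
  rw [h, Finset.sum_eq_single_of_mem 0 (Finset.mem_range.mpr (Nat.succ_pos _))]
  · have h0 : zchoose 0 0 = 1 := by unfold zchoose; simp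
    have h1 : zsgn 0 = 1 := by unfold zsgn; simp
    simp [h0, h1, one_smul]
  · intro t _ ht
    rw [zchoose_zero_ne t ht, mul_zero, zero_smul]

lemma d_comm_T (b : V) : W.Y 0 x (W.T b) = W.T (W.Y 0 x b) := by
  have := W.transl x b 0
  simp only [neg_zero, Int.cast_zero, zero_smul, sub_eq_zero] at this
  exact this.symm

lemma ker_graded (hx : x ∈ W.G 1) {a : V} (ha : W.Y 0 x a = 0) :
    ∃ a0 a1 : V, a0 ∈ W.G 0 ∧ a1 ∈ W.G 1 ∧ W.Y 0 x a0 = 0 ∧ W.Y 0 x a1 = 0 ∧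
      a = a0 + a1 := by
  obtain ⟨a0, a1, h0, h1, hsum⟩ := Submodule.codisjoint_iff_exists_add_eq.mp W.compl.codisjoint a
  have hd0 : W.Y 0 x a0 ∈ W.G 1 := by
    have := W.parity 1 0 0 x hx a0 h0; simpa using this
  have hd1 : W.Y 0 x a1 ∈ W.G 0 := by
    have := W.parity 1 1 0 x hx a1 h1
    have e : (1 + 1 : ZMod 2) = 0 := by decide
    rwa [e] at this
  have hadd : W.Y 0 x a0 + W.Y 0 x a1 = 0 := by
    rw [← map_add, hsum]; exact ha
  have heq : W.Y 0 x a0 = -(W.Y 0 x a1) := by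
    rw [eq_neg_iff_add_eq_zero]; exact hadd
  have hz0 : W.Y 0 x a0 = 0 := by
    have hmem0 : W.Y 0 x a0 ∈ W.G 0 := by rw [heq]; exact neg_mem hd1
    exact (Submodule.disjoint_def.mp W.compl.disjoint) _ hmem0 hd0
  refine ⟨a0, a1, h0, h1, hz0, ?_, hsum.symm⟩
  have := hadd; rw [hz0, zero_add] at this; exact this

lemma ker_closed (hx : x ∈ W.G 1) (n : ℤ) {a b : V}
    (ha : W.Y 0 x a = 0) (hb : W.Y 0 x b = 0) : W.Y 0 x (W.Y n a b) = 0 := by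
  obtain ⟨a0, a1, h0, h1, hz0, hz1, rfl⟩ := ker_graded W hx ha
  have k0 := keyA W hx h0 n b
  have k1 := keyA W hx h1 n b
  rw [hz0] at k0; rw [hz1] at k1
  simp only [map_zero, LinearMap.zero_apply, hb, smul_zero, sub_zero] at k0 k1
  rw [map_add, LinearMap.add_apply, map_add, ← k0, ← k1]
  simp

/-- `a ∈ ker`, `c' : V` implies `Y n a (d c') ∈ range d`. -/
lemma Y_ker_range (hx : x ∈ W.G 1) (n : ℤ) {a : V} (ha : W.Y 0 x a = 0) (c' : V) :
    W.Y n a (W.Y 0 x c') ∈ LinearMap.range (W.Y 0 x) := by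
  obtain ⟨a0, a1, h0, h1, hz0, hz1, rfl⟩ := ker_graded W hx ha
  have gen : ∀ (j : ZMod 2) (u : V), u ∈ W.G j → W.Y 0 x u = 0 →
      W.Y n u (W.Y 0 x c') ∈ LinearMap.range (W.Y 0 x) := by
    intro j u hu hz
    have k := keyA W hx hu n c'
    rw [hz] at k
    simp only [map_zero, LinearMap.zero_apply] at k
    have h2 : W.Y n u (W.Y 0 x c') = W.Y 0 x (ssgn 1 j • W.Y n u c') := by
      have := congrArg (fun v => ssgn 1 j • v) k
      simp only [smul_sub, smul_smul, ssgn_mul_self, one_smul, smul_zero] at this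
      rw [map_smul]
      have h3 : (0 : V) = ssgn 1 j • W.Y 0 x (W.Y n u c') - W.Y n u (W.Y 0 x c') := this
      rw [eq_comm, sub_eq_zero] at h3
      exact h3.symm
    rw [h2]; exact ⟨_, rfl⟩
  rw [map_add, LinearMap.add_apply]
  exact add_mem (gen 0 a0 h0 hz0) (gen 1 a1 h1 hz1)

/-- `c ∈ ker`, `a' : V` implies `Y n (d a') c ∈ range d`. -/
lemma Y_range_ker (hx : x ∈ W.G 1) (n : ℤ) (a' : V) {c : V} (hc : W.Y 0 x c = 0) :
    W.Y n (W.Y 0 x a') c ∈ LinearMap.range (W.Y 0 x) := by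
  obtain ⟨b0, b1, hb0, hb1, hsum⟩ :=
    Submodule.codisjoint_iff_exists_add_eq.mp W.compl.codisjoint a'
  have gen : ∀ (j : ZMod 2) (u : V), u ∈ W.G j →
      W.Y n (W.Y 0 x u) c ∈ LinearMap.range (W.Y 0 x) := by
    intro j u hu
    have k := keyA W hx hu n c
    rw [hc] at k
    simp only [map_zero, smul_zero, sub_zero] at k
    rw [k]; exact ⟨_, rfl⟩
  rw [← hsum, map_add, map_add, LinearMap.add_apply]
  exact add_mem (gen 0 b0 hb0) (gen 1 b1 hb1)

variable (x) in
/-- kernel of `x_{(0)}`. -/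
noncomputable abbrev Kc : Submodule ℂ V := LinearMap.ker (W.Y 0 x)

variable (x) in
/-- the submodule of `Kc` to quotient by. -/
noncomputable abbrev Nc : Submodule ℂ (Kc W x) :=
  (LinearMap.range (W.Y 0 x)).comap (Kc W x).subtype

lemma mem_Nc {a : Kc W x} : a ∈ Nc W x ↔ (a : V) ∈ LinearMap.range (W.Y 0 x) :=
  Iff.rfl

/-- modes on the kernel. -/
noncomputable def Yk (hx : x ∈ W.G 1) (n : ℤ) :
    Kc W x →ₗ[ℂ] Kc W x →ₗ[ℂ] Kc W x :=
  LinearMap.mk₂ ℂ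
    (fun a b => ⟨W.Y n a.1 b.1,
      LinearMap.mem_ker.mpr (ker_closed W hx n a.2 b.2)⟩)
    (fun a a' b => Subtype.ext (by simp)
    ) (fun c a b => Subtype.ext (by simp)
    ) (fun a b b' => Subtype.ext (by simp)
    ) (fun c a b => Subtype.ext (by simp))

@[simp] lemma Yk_coe (hx : x ∈ W.G 1) (n : ℤ) (a b : Kc W x) :
    (Yk W hx n a b : V) = W.Y n a.1 b.1 := rfl

lemma Yk_mem_Nc_left (hx : x ∈ W.G 1) (n : ℤ) {a : Kc W x} (ha : a ∈ Nc W x)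
    (b : Kc W x) : Yk W hx n a b ∈ Nc W x := by
  obtain ⟨a', ha'⟩ := (mem_Nc W).mp ha
  rw [mem_Nc, Yk_coe, ← ha']
  exact Y_range_ker W hx n a' b.2

lemma Yk_mem_Nc_right (hx : x ∈ W.G 1) (n : ℤ) (a : Kc W x) {b : Kc W x}
    (hb : b ∈ Nc W x) : Yk W hx n a b ∈ Nc W x := by
  obtain ⟨b', hb'⟩ := (mem_Nc W).mp hb
  rw [mem_Nc, Yk_coe, ← hb']
  exact Y_ker_range W hx n a.2 b'

/-- modes on the quotient: first lift. -/
noncomputable def Yq1 (hx : x ∈ W.G 1) (n : ℤ) :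
    DS (W.Y 0 x) →ₗ[ℂ] (Kc W x →ₗ[ℂ] DS (W.Y 0 x)) :=
  (Nc W x).liftQ ((Yk W hx n).compr₂ (Nc W x).mkQ) (by
    intro a ha
    rw [LinearMap.mem_ker]
    ext b
    simp only [LinearMap.compr₂_apply, LinearMap.zero_apply]
    rw [Submodule.mkQ_apply, Submodule.Quotient.mk_eq_zero]
    exact Yk_mem_Nc_left W hx n ha b)

/-- modes on the quotient. -/
noncomputable def Yq (hx : x ∈ W.G 1) (n : ℤ) :
    DS (W.Y 0 x) →ₗ[ℂ] DS (W.Y 0 x) →ₗ[ℂ] DS (W.Y 0 x) :=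
  ((Nc W x).liftQ (Yq1 W hx n).flip (by
    intro b hb
    rw [LinearMap.mem_ker]
    ext q
    show Yq1 W hx n (Submodule.Quotient.mk q) b = 0
    show Submodule.mkQ _ (Yk W hx n q b) = 0
    rw [Submodule.mkQ_apply, Submodule.Quotient.mk_eq_zero]
    exact Yk_mem_Nc_right W hx n q hb)).flip

lemma Yq_mk (hx : x ∈ W.G 1) (n : ℤ) (a b : Kc W x) :
    Yq W hx n (Submodule.Quotient.mk a) (Submodule.Quotient.mk b)
      = Submodule.Quotient.mk (Yk W hx n a b) := rfl

/-- translation on the kernel. -/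
noncomputable def Tk (x : V) : Kc W x →ₗ[ℂ] Kc W x :=
  W.T.restrict (fun a ha => by
    rw [LinearMap.mem_ker] at ha ⊢
    rw [d_comm_T, ha, map_zero])

@[simp] lemma Tk_coe (a : Kc W x) : (Tk W x a : V) = W.T a.1 := rfl

/-- translation on the quotient. -/
noncomputable def Tq (x : V) : DS (W.Y 0 x) →ₗ[ℂ] DS (W.Y 0 x) :=
  (Nc W x).mapQ (Nc W x) (Tk W x) (by
    intro a ha
    obtain ⟨a', ha'⟩ := (mem_Nc W).mp ha
    rw [Submodule.mem_comap, mem_Nc, Tk_coe, ← ha', ← d_comm_T]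
    exact ⟨W.T a', rfl⟩)

lemma Tq_mk (a : Kc W x) :
    Tq W x (Submodule.Quotient.mk a) = Submodule.Quotient.mk (Tk W x a) :=
  Submodule.mapQ_apply _ _ _ a

variable (x) in
/-- grading on the quotient. -/
noncomputable def Gq (i : ZMod 2) : Submodule ℂ (DS (W.Y 0 x)) :=
  ((W.G i).comap (Kc W x).subtype).map (Nc W x).mkQ

lemma hvac_ker : W.vac ∈ Kc W x := LinearMap.mem_ker.mpr (W.vacRight x 0 le_rfl)

set_option maxHeartbeats 1000000 in
/-- the quotient vertex superalgebra. -/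
noncomputable def quotVSA (hx : x ∈ W.G 1)
    (hvac : W.vac ∉ LinearMap.range (W.Y 0 x)) :
    VertexSuperAlgebra (DS (W.Y 0 x)) where
  G := Gq W x
  compl := by
    constructor
    · rw [Submodule.disjoint_def]
      intro q h0 h1
      obtain ⟨a0, ha0, rfl⟩ := Submodule.mem_map.mp h0
      obtain ⟨a1, ha1, he⟩ := Submodule.mem_map.mp h1
      rw [Submodule.mkQ_apply] at he ⊢
      have hd : a1 - a0 ∈ Nc W x := (Submodule.Quotient.eq _).mp he
      obtain ⟨c, hc⟩ := (mem_Nc W).mp hd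
      obtain ⟨c0, c1, hc0, hc1, hcs⟩ :=
        Submodule.codisjoint_iff_exists_add_eq.mp W.compl.codisjoint c
      have hsplit : (a0 : V) + W.Y 0 x c1 = (a1 : V) - W.Y 0 x c0 := by
        have : W.Y 0 x c0 + W.Y 0 x c1 = (a1 : V) - (a0 : V) := by
          rw [← LinearMap.map_add, hcs]; exact_mod_cast hc
        have h' := this
        abel_nf
        abel_nf at h'
        linear_combination (norm := abel_nf) h'
      have hm0 : (a0 : V) + W.Y 0 x c1 ∈ W.G 0 := by
        refine add_mem ha0 ?_
        have := W.parity 1 1 0 x hx c1 hc1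
        have e : (1 + 1 : ZMod 2) = 0 := by decide
        rwa [e] at this
      have hm1 : (a0 : V) + W.Y 0 x c1 ∈ W.G 1 := by
        rw [hsplit]
        refine sub_mem ha1 ?_
        have := W.parity 1 0 0 x hx c0 hc0
        simpa using this
      have hz : (a0 : V) + W.Y 0 x c1 = 0 :=
        (Submodule.disjoint_def.mp W.compl.disjoint) _ hm0 hm1
      have : (a0 : V) = W.Y 0 x (-c1) := by
        rw [map_neg]
        exact eq_neg_of_add_eq_zero_left hz
      rw [Submodule.Quotient.mk_eq_zero]
      exact (mem_Nc W).mpr ⟨-c1, this.symm⟩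
    · rw [codisjoint_iff, eq_top_iff]
      intro q _
      obtain ⟨a, rfl⟩ := Submodule.Quotient.mk_surjective _ q
      obtain ⟨a0, a1, h0, h1, hz0, hz1, hsum⟩ :=
        ker_graded W hx (LinearMap.mem_ker.mp a.2)
      have hdec : a = (⟨a0, LinearMap.mem_ker.mpr hz0⟩ : Kc W x)
          + ⟨a1, LinearMap.mem_ker.mpr hz1⟩ := Subtype.ext hsum
      rw [hdec, Submodule.Quotient.mk_add]
      exact Submodule.add_mem_sup
        (Submodule.mem_map.mpr ⟨_, h0, rfl⟩)
        (Submodule.mem_map.mpr ⟨_, h1, rfl⟩)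
  vac := Submodule.Quotient.mk ⟨W.vac, hvac_ker W⟩
  vacNe := by
    intro h
    rw [Submodule.Quotient.mk_eq_zero] at h
    exact hvac ((mem_Nc W).mp h)
  vacEven := Submodule.mem_map.mpr ⟨⟨W.vac, hvac_ker W⟩, W.vacEven, rfl⟩
  T := Tq W x
  Y := Yq W hx
  parity := by
    intro i j n q hq r hr
    obtain ⟨a, ha, rfl⟩ := Submodule.mem_map.mp hq
    obtain ⟨b, hb, rfl⟩ := Submodule.mem_map.mp hr
    rw [Submodule.mkQ_apply, Submodule.mkQ_apply, Yq_mk]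
    exact Submodule.mem_map.mpr ⟨_, W.parity i j n _ ha _ hb, rfl⟩
  trunc := by
    intro q r
    obtain ⟨a, rfl⟩ := Submodule.Quotient.mk_surjective _ q
    obtain ⟨b, rfl⟩ := Submodule.Quotient.mk_surjective _ r
    obtain ⟨N, hN⟩ := W.trunc a.1 b.1
    refine ⟨N, fun n hn => ?_⟩
    rw [Yq_mk]
    have : Yk W hx n a b = 0 := Subtype.ext (hN n hn)
    rw [this, Submodule.Quotient.mk_zero]
  vacLeft := by
    intro n q
    obtain ⟨b, rfl⟩ := Submodule.Quotient.mk_surjective _ q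
    rw [Yq_mk]
    split_ifs with h
    · exact congrArg _ (Subtype.ext (by rw [Yk_coe, W.vacLeft]; simp [h]))
    · have : Yk W hx n ⟨W.vac, hvac_ker W⟩ b = 0 :=
        Subtype.ext (by rw [Yk_coe, W.vacLeft]; simp [h])
      rw [this, Submodule.Quotient.mk_zero]
  vacRight := by
    intro q n hn
    obtain ⟨a, rfl⟩ := Submodule.Quotient.mk_surjective _ q
    rw [Yq_mk]
    have : Yk W hx n a ⟨W.vac, hvac_ker W⟩ = 0 :=
      Subtype.ext (by rw [Yk_coe]; exact W.vacRight a.1 n hn)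
    rw [this, Submodule.Quotient.mk_zero]
  vacCreate := by
    intro q
    obtain ⟨a, rfl⟩ := Submodule.Quotient.mk_surjective _ q
    rw [Yq_mk]
    exact congrArg _ (Subtype.ext (by rw [Yk_coe]; exact W.vacCreate a.1))
  Tvac := by
    rw [Tq_mk]
    have : Tk W x ⟨W.vac, hvac_ker W⟩ = 0 := Subtype.ext (by rw [Tk_coe]; exact W.Tvac)
    rw [this, Submodule.Quotient.mk_zero]
  transl := by
    intro q r n
    obtain ⟨a, rfl⟩ := Submodule.Quotient.mk_surjective _ q
    obtain ⟨b, rfl⟩ := Submodule.Quotient.mk_surjective _ r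
    rw [Yq_mk, Tq_mk, Tq_mk, Yq_mk, Yq_mk]
    have key : Tk W x (Yk W hx n a b) - Yk W hx n a (Tk W x b)
        = (-(n : ℂ)) • Yk W hx (n - 1) a b := by
      apply Subtype.ext
      push_cast [AddSubgroupClass.coe_sub, SetLike.val_smul, Tk_coe, Yk_coe]
      exact_mod_cast W.transl a.1 b.1 n
    rw [← Submodule.Quotient.mk_sub, key, Submodule.Quotient.mk_smul]
  borcherds := by
    intro i j q hq r hr m n s
    obtain ⟨a, ha, rfl⟩ := Submodule.mem_map.mp hq
    obtain ⟨b, hb, rfl⟩ := Submodule.mem_map.mp hr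
    obtain ⟨c, rfl⟩ := Submodule.Quotient.mk_surjective _ s
    obtain ⟨K0, hK0⟩ := W.borcherds i j a.1 ha b.1 hb m n c.1
    refine ⟨K0, fun K' hK' => ?_⟩
    have hV := hK0 K' hK'
    rw [Submodule.mkQ_apply, Submodule.mkQ_apply]
    simp only [Yq_mk]
    have key : Yk W hx n (Yk W hx m a b) c
        = ∑ t ∈ Finset.range K', ((-1 : ℂ) ^ t * zchoose m t) •
            (Yk W hx (m - t) a (Yk W hx (n + t) b c)
              - (zsgn m * ssgn i j) • Yk W hx (m + n - t) b (Yk W hx (t : ℤ) a c)) := by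
      apply Subtype.ext
      rw [Yk_coe, Yk_coe, Submodule.coe_sum]
      simp only [SetLike.val_smul, AddSubgroupClass.coe_sub, Yk_coe]
      exact hV
    rw [key]
    have mksum : (Submodule.Quotient.mk (p := Nc W x)) = (Nc W x).mkQ := rfl
    rw [mksum, map_sum]
    refine Finset.sum_congr rfl fun t _ => ?_
    rw [map_smul, map_sub, map_smul]

end Stmt8Aux

/-- for a vertex superalgebra `V` and odd `x` with `x_{(0)}x = 0` and
`vac ∉ Im x_{(0)}`, the quotient `Ker x_{(0)} / Im x_{(0)}` carries a vertex
superalgebra structure whose vacuum, translation operator and modes are induced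
from those of `V`. -/
theorem stmt8 {V : Type*} [AddCommGroup V] [Module ℂ V]
    (W : VertexSuperAlgebra V) (x : V) (hx : x ∈ W.G 1)
    (hxx : W.Y 0 x x = 0) (hvac : W.vac ∉ LinearMap.range (W.Y 0 x)) :
    ∃ Wq : VertexSuperAlgebra (DS (W.Y 0 x)),
      (∀ hv : W.vac ∈ LinearMap.ker (W.Y 0 x),
        Wq.vac = (Submodule.Quotient.mk ⟨W.vac, hv⟩ : DS (W.Y 0 x))) ∧
      (∀ (a : V) (ha : a ∈ LinearMap.ker (W.Y 0 x))
          (haT : W.T a ∈ LinearMap.ker (W.Y 0 x)),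
        Wq.T (Submodule.Quotient.mk ⟨a, ha⟩)
          = (Submodule.Quotient.mk ⟨W.T a, haT⟩ : DS (W.Y 0 x))) ∧
      (∀ (n : ℤ) (a b : V) (ha : a ∈ LinearMap.ker (W.Y 0 x))
          (hb : b ∈ LinearMap.ker (W.Y 0 x))
          (hab : W.Y n a b ∈ LinearMap.ker (W.Y 0 x)),
        Wq.Y n (Submodule.Quotient.mk ⟨a, ha⟩) (Submodule.Quotient.mk ⟨b, hb⟩)
          = (Submodule.Quotient.mk ⟨W.Y n a b, hab⟩ : DS (W.Y 0 x))) := by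
  refine ⟨Stmt8Aux.quotVSA W hx hvac, fun hv => rfl, fun a ha haT => ?_, fun n a b ha hb hab => ?_⟩
  · rw [show (Stmt8Aux.quotVSA W hx hvac).T = Stmt8Aux.Tq W x from rfl, Stmt8Aux.Tq_mk]
    rfl
  · rw [show (Stmt8Aux.quotVSA W hx hvac).Y = Stmt8Aux.Yq W hx from rfl, Stmt8Aux.Yq_mk]
    rfl
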